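/- arXiv:0709.1994 — 3 statements merged into one kernel-verified Lean document; each statement's English description precedes it below -/
import Mathlib

section
/- For any u : Ω → ℝ̄, the composition (I ∘ S)(u) is normal lower semi-continuous, i.e., I(S(I(S(u)))) = I(S(u)). -/
/-- The lower Baire operator: `I(u)(x) = sup_{δ>0} inf_{y ∈ B_δ(x)} u(y)`. -/
noncomputable def lowerBaire {n : ℕ} {Ω : Set (Fin n → ℝ)} (u : Ω → EReal) : Ω → EReal :=
  fun x => ⨆ (δ : ℝ) (_ : 0 < δ), ⨅ y ∈ Metric.ball x δ, u y

/-- The upper Baire operator: `S(u)(x) = inf_{δ>0} sup_{y ∈ B_δ(x)} u(y)`. -/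
noncomputable def upperBaire {n : ℕ} {Ω : Set (Fin n → ℝ)} (u : Ω → EReal) : Ω → EReal :=
  fun x => ⨅ (δ : ℝ) (_ : 0 < δ), ⨆ y ∈ Metric.ball x δ, u y

lemma lowerBaire_le {n : ℕ} {Ω : Set (Fin n → ℝ)} (u : Ω → EReal) (x : Ω) :
    lowerBaire u x ≤ u x :=
  iSup₂_le fun δ hδ => iInf₂_le x (Metric.mem_ball_self hδ)

lemma le_upperBaire {n : ℕ} {Ω : Set (Fin n → ℝ)} (u : Ω → EReal) (x : Ω) :
    u x ≤ upperBaire u x :=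
  le_iInf₂ fun δ hδ => le_iSup₂ (f := fun y (_ : y ∈ Metric.ball x δ) => u y) x (Metric.mem_ball_self hδ)

lemma lowerBaire_mono {n : ℕ} {Ω : Set (Fin n → ℝ)} {u v : Ω → EReal} (h : ∀ x, u x ≤ v x)
    (x : Ω) : lowerBaire u x ≤ lowerBaire v x :=
  iSup₂_mono fun _ _ => iInf₂_mono fun y _ => h y

lemma upperBaire_mono {n : ℕ} {Ω : Set (Fin n → ℝ)} {u v : Ω → EReal} (h : ∀ x, u x ≤ v x)
    (x : Ω) : upperBaire u x ≤ upperBaire v x :=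
  iInf₂_mono fun _ _ => iSup₂_mono fun y _ => h y

lemma ball_half_subset {n : ℕ} {Ω : Set (Fin n → ℝ)} {x y : Ω} {δ : ℝ}
    (hy : y ∈ Metric.ball x (δ / 2)) : Metric.ball y (δ / 2) ⊆ Metric.ball x δ := by
  intro z hz
  simp only [Metric.mem_ball] at *
  calc dist z x ≤ dist z y + dist y x := dist_triangle _ _ _
    _ < δ / 2 + δ / 2 := add_lt_add hz hy
    _ = δ := by ring

lemma lowerBaire_idem {n : ℕ} {Ω : Set (Fin n → ℝ)} (u : Ω → EReal) :
    lowerBaire (lowerBaire u) = lowerBaire u := by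
  funext x
  refine le_antisymm (lowerBaire_le _ x) ?_
  refine iSup₂_le fun δ hδ => ?_
  have h1 : (⨅ y ∈ Metric.ball x δ, u y) ≤ ⨅ y ∈ Metric.ball x (δ / 2), lowerBaire u y := by
    refine le_iInf₂ fun y hy => ?_
    refine le_trans ?_ (le_iSup₂ (f := fun ε (_ : 0 < ε) => ⨅ z ∈ Metric.ball y ε, u z)
      (δ / 2) (half_pos hδ))
    exact biInf_mono fun z hz => ball_half_subset hy hz
  exact h1.trans (le_iSup₂ (f := fun ε (_ : 0 < ε) => ⨅ z ∈ Metric.ball x ε, lowerBaire u z)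
    (δ / 2) (half_pos hδ))

lemma upperBaire_idem {n : ℕ} {Ω : Set (Fin n → ℝ)} (u : Ω → EReal) :
    upperBaire (upperBaire u) = upperBaire u := by
  funext x
  refine le_antisymm ?_ (le_upperBaire _ x)
  refine le_iInf₂ fun δ hδ => ?_
  have h1 : (⨆ y ∈ Metric.ball x (δ / 2), upperBaire u y) ≤ ⨆ y ∈ Metric.ball x δ, u y := by
    refine iSup₂_le fun y hy => ?_
    refine le_trans (iInf₂_le (f := fun ε (_ : 0 < ε) => ⨆ z ∈ Metric.ball y ε, u z)
      (δ / 2) (half_pos hδ)) ?_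
    exact biSup_mono fun z hz => ball_half_subset hy hz
  exact le_trans (iInf₂_le (f := fun ε (_ : 0 < ε) => ⨆ z ∈ Metric.ball x ε, upperBaire u z)
    (δ / 2) (half_pos hδ)) h1

/-- `(I ∘ S)(u)` is normal lower semi-continuous: `I(S(I(S(u)))) = I(S(u))`. -/
theorem lowerBaire_upperBaire_normal {n : ℕ} {Ω : Set (Fin n → ℝ)} (hΩ : IsOpen Ω)
    (hne : Ω.Nonempty) (u : Ω → EReal) :
    lowerBaire (upperBaire (lowerBaire (upperBaire u))) = lowerBaire (upperBaire u) := by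
  funext x
  apply le_antisymm
  · -- ISIS u ≤ IS u : since IS u ≤ S u, S(IS u) ≤ S(S u) = S u, then apply I.
    have h1 : ∀ y, upperBaire (lowerBaire (upperBaire u)) y ≤ upperBaire u y := by
      intro y
      have := upperBaire_mono (fun z => lowerBaire_le (upperBaire u) z) y
      rwa [upperBaire_idem] at this
    exact lowerBaire_mono h1 x
  · -- IS u = I(IS u) ≤ I(S(IS u))
    have h2 : ∀ y, lowerBaire (upperBaire u) y ≤ upperBaire (lowerBaire (upperBaire u)) y :=
      fun y => le_upperBaire _ y
    have := lowerBaire_mono h2 x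
    rwa [lowerBaire_idem] at this
end

section
/- If u, v : Ω → ℝ̄ are normal lower semi-continuous and u = v on a dense subset D of Ω, then u = v on all of Ω. -/
private theorem upperBaire_mono_aux {n : ℕ} {Ω : Set (Fin n → ℝ)}
    (f g : Ω → EReal) (D : Set Ω) (hD : Dense D) (hfg : ∀ x ∈ D, f x = g x)
    (w : Ω → EReal) (hw : lowerBaire w = f) (x : Ω) :
    upperBaire f x ≤ upperBaire g x := by
  refine iInf_mono fun δ => iInf_mono fun hδ => ?_
  refine iSup₂_le fun y hy => ?_
  rw [← hw]
  refine iSup₂_le fun ε hε => ?_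
  have hyx : dist y x < δ := Metric.mem_ball.mp hy
  set ε' := min ε (δ - dist y x) with hε'def
  have hε'pos : 0 < ε' := lt_min hε (by linarith)
  have hε'le : ε' ≤ ε := min_le_left _ _
  have hε'le' : ε' ≤ δ - dist y x := min_le_right _ _
  obtain ⟨d, hdball, hdD⟩ := Metric.dense_iff.mp hD y (ε' / 2) (by positivity)
  have hdy : dist d y < ε' / 2 := Metric.mem_ball.mp hdball
  have hdx : d ∈ Metric.ball x δ := by
    have h1 : dist d x ≤ dist d y + dist y x := dist_triangle d y x
    exact Metric.mem_ball.mpr (by linarith)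
  have hsub : Metric.ball d (ε' / 2) ⊆ Metric.ball y ε := by
    intro z hz
    have hz' : dist z d < ε' / 2 := Metric.mem_ball.mp hz
    have h1 : dist z y ≤ dist z d + dist d y := dist_triangle z d y
    exact Metric.mem_ball.mpr (by linarith)
  calc ⨅ z ∈ Metric.ball y ε, w z
      ≤ ⨅ z ∈ Metric.ball d (ε' / 2), w z := biInf_mono hsub
    _ ≤ lowerBaire w d := by
        refine le_iSup₂_of_le (ε' / 2) (by positivity) le_rfl
    _ = g d := by rw [hw]; exact hfg d hdD
    _ ≤ ⨆ z ∈ Metric.ball x δ, g z := le_iSup₂_of_le d hdx le_rfl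

/-- Two normal lower semi-continuous functions agreeing on a dense set agree everywhere. -/
theorem nlsc_eq_of_denseEq {n : ℕ} {Ω : Set (Fin n → ℝ)} (hΩ : IsOpen Ω) (hne : Ω.Nonempty)
    (u v : Ω → EReal) (hu : lowerBaire (upperBaire u) = u) (hv : lowerBaire (upperBaire v) = v)
    (D : Set Ω) (hD : Dense D) (huv : ∀ x ∈ D, u x = v x) : u = v := by
  have hS : upperBaire u = upperBaire v := by
    funext x
    exact le_antisymm
      (upperBaire_mono_aux u v D hD huv _ hu x)
      (upperBaire_mono_aux v u D hD (fun x hx => (huv x hx).symm) _ hv x)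
  rw [← hu, ← hv, hS]
end

section
/- The almost-everywhere convergence structure λ_a is Hausdorff: if a filter F converges a.e. to both u and v, with u and v normal lower semi-continuous and continuous outside closed nowhere dense null sets, then u = v. -/
open MeasureTheory Filter

/-- Membership of `ML⁰₀(Ω)`: a normal lower semi-continuous function which is
real-valued and continuous outside a closed nowhere dense Lebesgue-null set. -/
def ML00 {n : ℕ} {Ω : Set (Fin n → ℝ)} (u : Ω → EReal) : Prop :=
  lowerBaire (upperBaire u) = u ∧
  ∃ Γ : Set Ω, IsClosed Γ ∧ interior (closure Γ) = ∅ ∧ volume (Subtype.val '' Γ) = 0 ∧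
    (∀ x ∈ Γᶜ, ∃ r : ℝ, u x = (r : EReal)) ∧ ContinuousOn u Γᶜ

/-- A filter `F` on `ML⁰₀(Ω)`-type functions converges almost everywhere to `u`
if off some Lebesgue-null set `E ⊆ Ω` the evaluation filters converge. -/
def aeConv {n : ℕ} {Ω : Set (Fin n → ℝ)} (F : Filter (Ω → EReal)) (u : Ω → EReal) : Prop :=
  ∃ E : Set Ω, volume (Subtype.val '' E) = 0 ∧
    ∀ x ∈ Eᶜ, Tendsto (fun v => v x) F (nhds (u x))

/-- At a point of continuity lying in an open set, the upper Baire operator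
reproduces the value of the function. -/
lemma upperBaire_eq_of_continuousAt {n : ℕ} {Ω : Set (Fin n → ℝ)} (u : Ω → EReal)
    {z : Ω} (hc : ContinuousAt u z) : upperBaire u z = u z := by
  refine le_antisymm ?_ ?_
  · refine le_of_forall_gt_imp_ge_of_dense fun a ha => ?_
    have h1 : {y : Ω | u y < a} ∈ nhds z := hc (IsOpen.mem_nhds isOpen_Iio ha)
    obtain ⟨δ, hδ, hball⟩ := Metric.mem_nhds_iff.1 h1
    refine iInf₂_le_of_le δ hδ ?_
    exact iSup₂_le fun y hy => le_of_lt (hball hy)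
  · exact le_iInf₂ fun δ hδ => le_iSup₂_of_le z (Metric.mem_ball_self hδ) le_rfl

/-- A normal lower semi-continuous function continuous on an open dense set `G`
is determined by its restriction to `G`. -/
lemma nlsc_eq_sup_inf {n : ℕ} {Ω : Set (Fin n → ℝ)} (u : Ω → EReal)
    (hu : lowerBaire (upperBaire u) = u) (G : Set Ω) (hGd : Dense G)
    (hc : ∀ z ∈ G, ContinuousAt u z) (x : Ω) :
    u x = ⨆ (δ : ℝ) (_ : 0 < δ), ⨅ y ∈ Metric.ball x δ ∩ G, u y := by
  have hS : ∀ z ∈ G, upperBaire u z = u z := fun z hz =>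
    upperBaire_eq_of_continuousAt u (hc z hz)
  refine le_antisymm ?_ ?_
  · conv_lhs => rw [← hu]
    refine iSup₂_mono fun δ _ => ?_
    refine le_iInf₂ fun y hy => ?_
    exact iInf₂_le_of_le y hy.1 (le_of_eq (hS y hy.2))
  · conv_rhs => rw [← hu]
    refine iSup₂_mono fun δ hδ => ?_
    refine le_iInf₂ fun y hy => ?_
    -- show `⨅ w ∈ ball x δ ∩ G, u w ≤ upperBaire u y`
    refine le_iInf₂ fun ε hε => ?_
    have hyx : dist y x < δ := Metric.mem_ball.1 hy
    set ε' : ℝ := min ε (δ - dist y x) with hε'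
    have hε'pos : 0 < ε' := lt_min hε (by linarith)
    obtain ⟨z, hz⟩ := hGd.inter_open_nonempty (Metric.ball y ε') Metric.isOpen_ball
      ⟨y, Metric.mem_ball_self hε'pos⟩
    have hzy : dist z y < ε' := Metric.mem_ball.1 hz.1
    have hzx : z ∈ Metric.ball x δ := by
      have : dist z x ≤ dist z y + dist y x := dist_triangle z y x
      have h2 : ε' ≤ δ - dist y x := min_le_right _ _
      exact Metric.mem_ball.2 (by linarith)
    refine le_trans (iInf₂_le z ⟨hzx, hz.2⟩) ?_
    refine le_iSup₂_of_le z ?_ le_rfl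
    exact Metric.mem_ball.2 (lt_of_lt_of_le hzy (min_le_left _ _))

/-- The a.e. convergence structure on `ML⁰₀(Ω)` is Hausdorff: limits are unique. -/
theorem aeConv_hausdorff {n : ℕ} {Ω : Set (Fin n → ℝ)} (hΩ : IsOpen Ω)
    (F : Filter (Ω → EReal)) [F.NeBot] (u v : Ω → EReal) (hu : ML00 u) (hv : ML00 v)
    (hFu : aeConv F u) (hFv : aeConv F v) : u = v := by
  obtain ⟨hnu, Γu, hΓuc, hΓui, -, -, hucont⟩ := hu
  obtain ⟨hnv, Γv, hΓvc, hΓvi, -, -, hvcont⟩ := hv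
  obtain ⟨Eu, hEu0, hEu⟩ := hFu
  obtain ⟨Ev, hEv0, hEv⟩ := hFv
  -- `u = v` off the null set `E := Eu ∪ Ev`
  set E : Set Ω := Eu ∪ Ev with hE
  have hEeq : ∀ x ∈ Eᶜ, u x = v x := by
    intro x hx
    rw [Set.compl_union] at hx
    exact tendsto_nhds_unique (hEu x hx.1) (hEv x hx.2)
  -- a null subset of an open set has dense complement
  have hE0 : volume (Subtype.val '' E) = 0 := by
    refine measure_mono_null ?_ (measure_union_null hEu0 hEv0)
    rw [Set.image_union]
  have hEdense : Dense (Eᶜ : Set Ω) := by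
    rw [← interior_eq_empty_iff_dense_compl]
    by_contra h
    obtain ⟨x, hx⟩ := Set.nonempty_iff_ne_empty.2 h
    have hopen : IsOpen (Subtype.val '' (interior E)) :=
      hΩ.isOpenMap_subtype_val _ isOpen_interior
    have hpos : 0 < volume (Subtype.val '' (interior E)) :=
      hopen.measure_pos volume ⟨x, Set.mem_image_of_mem _ hx⟩
    have : volume (Subtype.val '' (interior E)) = 0 :=
      measure_mono_null (Set.image_mono interior_subset) hE0
    exact absurd this hpos.ne'
  -- the good open dense set
  set G : Set Ω := (Γu ∪ Γv)ᶜ with hG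
  have hGo : IsOpen G := (hΓuc.union hΓvc).isOpen_compl
  have hGd : Dense G := by
    rw [hG, ← interior_eq_empty_iff_dense_compl]
    have hiu : interior Γu = ∅ := by rwa [hΓuc.closure_eq] at hΓui
    have hiv : interior Γv = ∅ := by rwa [hΓvc.closure_eq] at hΓvi
    -- interior of union of closed nowhere dense sets is empty
    have h1 : interior (Γu ∪ Γv) \ Γu ⊆ interior Γv := by
      refine interior_maximal ?_ (isOpen_interior.sdiff hΓuc)
      intro y hy
      rcases interior_subset hy.1 with h | h
      · exact absurd h hy.2
      · exact h
    rw [hiv, Set.subset_empty_iff, Set.diff_eq_empty] at h1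
    have h2 : interior (Γu ∪ Γv) ⊆ interior Γu := interior_maximal h1 isOpen_interior
    rw [hiu, Set.subset_empty_iff] at h2
    exact h2
  have hcu : ∀ z ∈ G, ContinuousAt u z := fun z hz =>
    hucont.continuousAt (hΓuc.isOpen_compl.mem_nhds fun h => hz (Set.mem_union_left _ h))
  have hcv : ∀ z ∈ G, ContinuousAt v z := fun z hz =>
    hvcont.continuousAt (hΓvc.isOpen_compl.mem_nhds fun h => hz (Set.mem_union_right _ h))
  -- `u = v` on `G` by continuity and density of `Eᶜ`
  have hGeq : ∀ z ∈ G, u z = v z := by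
    intro z hz
    have hmem : z ∈ closure (G ∩ Eᶜ) := hEdense.open_subset_closure_inter hGo hz
    have hne : (nhdsWithin z (G ∩ Eᶜ)).NeBot := mem_closure_iff_nhdsWithin_neBot.1 hmem
    have h1 : Tendsto u (nhdsWithin z (G ∩ Eᶜ)) (nhds (u z)) :=
      ((hcu z hz).tendsto).mono_left nhdsWithin_le_nhds
    have h2 : Tendsto v (nhdsWithin z (G ∩ Eᶜ)) (nhds (v z)) :=
      ((hcv z hz).tendsto).mono_left nhdsWithin_le_nhds
    have h3 : Tendsto u (nhdsWithin z (G ∩ Eᶜ)) (nhds (v z)) := by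
      refine h2.congr' ?_
      filter_upwards [self_mem_nhdsWithin] with w hw
      exact (hEeq w hw.2).symm
    exact tendsto_nhds_unique h1 h3
  -- conclude via the representation through `G`
  funext x
  rw [nlsc_eq_sup_inf u hnu G hGd hcu x, nlsc_eq_sup_inf v hnv G hGd hcv x]
  congr 1
  ext δ
  congr 1
  ext hδ
  exact iInf_congr fun y => iInf_congr fun hy => hGeq y hy.2
end
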